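/- Let p, q, r be distinct primes and let G be a non-abelian solvable group of order p^3 · q · r. Then the intersection graph of subgroups I(G) contains K_5 as a subgraph, i.e., I(G) has a clique on 5 vertices. -/

import Mathlib

open SimpleGraph

/-- The intersection graph of subgroups of a group `G`: vertices are the
nontrivial proper subgroups of `G`, and two distinct vertices are adjacent
iff the corresponding subgroups have nontrivial intersection. -/
def interGraph (G : Type*) [Group G] :
    SimpleGraph {H : Subgroup G // H ≠ ⊥ ∧ H ≠ ⊤} where
  Adj H K := H ≠ K ∧ H.1 ⊓ K.1 ≠ ⊥
  symm := by
    constructor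
    rintro H K ⟨hne, hint⟩
    exact ⟨hne.symm, by rwa [inf_comm] at hint⟩
  loopless := by
    constructor
    rintro H ⟨hne, _⟩
    exact hne rfl

section Aux

variable {G : Type*} [Group G]

private lemma card_sup_eq_relIndex_mul (S H : Subgroup G) [S.Normal] :
    Nat.card ↥(S ⊔ H) = S.relIndex H * Nat.card S := by
  rw [Subgroup.card_eq_card_quotient_mul_card_subgroup (S.subgroupOf (S ⊔ H))]
  congr 1
  · have h1 : Nat.card (↥(S ⊔ H) ⧸ S.subgroupOf (S ⊔ H)) = S.relIndex (S ⊔ H) := rfl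
    rw [h1, Subgroup.relIndex_sup_left]
  · exact Nat.card_congr (Subgroup.subgroupOfEquivOfLe (le_sup_left : S ≤ S ⊔ H)).toEquiv

private lemma card_sup_of_coprime [Finite G] (S H : Subgroup G) [S.Normal]
    (h : Nat.Coprime (Nat.card S) (Nat.card H)) :
    Nat.card ↥(S ⊔ H) = Nat.card S * Nat.card H := by
  have h1 : Nat.card ↥(S ⊔ H) = S.relIndex H * Nat.card S := card_sup_eq_relIndex_mul S H
  have h2 : S.relIndex H ∣ Nat.card H := Subgroup.index_dvd_card (H := S.subgroupOf H)
  have h3 : Nat.card H ∣ Nat.card ↥(S ⊔ H) := Subgroup.card_dvd_of_le le_sup_right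
  rw [h1] at h3
  have h4 : Nat.card H ∣ S.relIndex H := (Nat.Coprime.dvd_of_dvd_mul_right h.symm h3)
  rw [h1, Nat.dvd_antisymm h2 h4, mul_comm]

private lemma clique5 [Finite G]
    (C : Subgroup G) (hC : C ≠ ⊥)
    (K0 K1 K2 K3 K4 : Subgroup G) (c0 c1 c2 c3 c4 : ℕ)
    (h0 : Nat.card K0 = c0) (h1 : Nat.card K1 = c1) (h2 : Nat.card K2 = c2)
    (h3 : Nat.card K3 = c3) (h4 : Nat.card K4 = c4)
    (l0 : C ≤ K0) (l1 : C ≤ K1) (l2 : C ≤ K2) (l3 : C ≤ K3) (l4 : C ≤ K4)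
    (t0 : c0 ≠ Nat.card G) (t1 : c1 ≠ Nat.card G) (t2 : c2 ≠ Nat.card G)
    (t3 : c3 ≠ Nat.card G) (t4 : c4 ≠ Nat.card G)
    (d01 : c0 ≠ c1) (d02 : c0 ≠ c2) (d03 : c0 ≠ c3) (d04 : c0 ≠ c4)
    (d12 : c1 ≠ c2) (d13 : c1 ≠ c3) (d14 : c1 ≠ c4)
    (d23 : c2 ≠ c3) (d24 : c2 ≠ c4) (d34 : c3 ≠ c4) :
    ∃ s, (interGraph G).IsNClique 5 s := by
  have hbot : ∀ (K : Subgroup G), C ≤ K → K ≠ ⊥ := fun K hK h =>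
    hC (le_bot_iff.mp (h ▸ hK))
  have htop : ∀ (K : Subgroup G) (c : ℕ), Nat.card K = c → c ≠ Nat.card G → K ≠ ⊤ := by
    intro K c hc hcc h
    subst h
    rw [Subgroup.card_top] at hc
    exact hcc hc.symm
  let v0 : {H : Subgroup G // H ≠ ⊥ ∧ H ≠ ⊤} := ⟨K0, hbot _ l0, htop _ _ h0 t0⟩
  let v1 : {H : Subgroup G // H ≠ ⊥ ∧ H ≠ ⊤} := ⟨K1, hbot _ l1, htop _ _ h1 t1⟩
  let v2 : {H : Subgroup G // H ≠ ⊥ ∧ H ≠ ⊤} := ⟨K2, hbot _ l2, htop _ _ h2 t2⟩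
  let v3 : {H : Subgroup G // H ≠ ⊥ ∧ H ≠ ⊤} := ⟨K3, hbot _ l3, htop _ _ h3 t3⟩
  let v4 : {H : Subgroup G // H ≠ ⊥ ∧ H ≠ ⊤} := ⟨K4, hbot _ l4, htop _ _ h4 t4⟩
  have key : ∀ (a b : Subgroup G) (ca cb : ℕ), Nat.card a = ca → Nat.card b = cb →
      ca ≠ cb → a ≠ b := by
    rintro a b ca cb rfl rfl hne rfl; exact hne rfl
  have n01 : v0 ≠ v1 := fun h => key _ _ _ _ h0 h1 d01 (congrArg Subtype.val h)
  have n02 : v0 ≠ v2 := fun h => key _ _ _ _ h0 h2 d02 (congrArg Subtype.val h)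
  have n03 : v0 ≠ v3 := fun h => key _ _ _ _ h0 h3 d03 (congrArg Subtype.val h)
  have n04 : v0 ≠ v4 := fun h => key _ _ _ _ h0 h4 d04 (congrArg Subtype.val h)
  have n12 : v1 ≠ v2 := fun h => key _ _ _ _ h1 h2 d12 (congrArg Subtype.val h)
  have n13 : v1 ≠ v3 := fun h => key _ _ _ _ h1 h3 d13 (congrArg Subtype.val h)
  have n14 : v1 ≠ v4 := fun h => key _ _ _ _ h1 h4 d14 (congrArg Subtype.val h)
  have n23 : v2 ≠ v3 := fun h => key _ _ _ _ h2 h3 d23 (congrArg Subtype.val h)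
  have n24 : v2 ≠ v4 := fun h => key _ _ _ _ h2 h4 d24 (congrArg Subtype.val h)
  have n34 : v3 ≠ v4 := fun h => key _ _ _ _ h3 h4 d34 (congrArg Subtype.val h)
  classical
  refine ⟨{v0, v1, v2, v3, v4}, ?_, ?_⟩
  · intro a ha b hb hab
    simp only [Finset.coe_insert, Set.mem_insert_iff, Finset.coe_singleton,
      Set.mem_singleton_iff] at ha hb
    have hCa : C ≤ a.1 := by
      rcases ha with rfl | rfl | rfl | rfl | rfl <;> assumption
    have hCb : C ≤ b.1 := by
      rcases hb with rfl | rfl | rfl | rfl | rfl <;> assumption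
    exact ⟨hab, fun h => hC (le_bot_iff.mp (h ▸ le_inf hCa hCb))⟩
  · rw [Finset.card_insert_of_notMem (by simp [n01, n02, n03, n04]),
      Finset.card_insert_of_notMem (by simp [n12, n13, n14]),
      Finset.card_insert_of_notMem (by simp [n23, n24]),
      Finset.card_insert_of_notMem (by simp [n34]),
      Finset.card_singleton]

end Aux

section Cases

variable {G : Type*} [Group G]

/-- The case where the normal prime-power subgroup is a `q`-group, `q` one of the
non-cubed primes. -/
private lemma case_q [Finite G] {p q r : ℕ}
    (hp : p.Prime) (hq : q.Prime) (hr : r.Prime)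
    (hpq : p ≠ q) (hpr : p ≠ r) (hqr : q ≠ r)
    (hcard : Nat.card G = p ^ 3 * q * r)
    (S : Subgroup G) [S.Normal] (hSbot : S ≠ ⊥) (hS : IsPGroup q S) :
    ∃ s, (interGraph G).IsNClique 5 s := by
  haveI := Fact.mk hp; haveI := Fact.mk hq; haveI := Fact.mk hr
  have hp2 := hp.two_le; have hq2 := hq.two_le; have hr2 := hr.two_le
  obtain ⟨k, hk⟩ := hS.exists_card_eq
  have hSdvd : Nat.card S ∣ Nat.card G := Subgroup.card_subgroup_dvd_card S
  have hk0 : k ≠ 0 := by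
    rintro rfl
    exact hSbot (Subgroup.card_eq_one.mp (by simpa using hk))
  -- `Nat.card S = q`
  have hcS : Nat.card S = q := by
    rcases Nat.lt_or_ge k 2 with hk2 | hk2
    · interval_cases k
      · exact absurd rfl hk0
      · simpa using hk
    · exfalso
      have hqq : q * q ∣ Nat.card G := by
        refine dvd_trans ?_ hSdvd
        rw [hk]
        calc q * q = q ^ 2 := by ring
        _ ∣ q ^ k := pow_dvd_pow q hk2
      rw [hcard] at hqq
      have h5 : q * q ∣ (p ^ 3 * r) * q := by
        have e : p ^ 3 * q * r = (p ^ 3 * r) * q := by ring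
        rwa [e] at hqq
      have hq' : q ∣ p ^ 3 * r := by
        rcases h5 with ⟨c, hc⟩
        exact ⟨c, Nat.eq_of_mul_eq_mul_right (by omega : 0 < q)
          (show (p ^ 3 * r) * q = (q * c) * q by rw [hc]; ring)⟩
      rcases hq.dvd_mul.mp hq' with h | h
      · exact hpq ((Nat.prime_dvd_prime_iff_eq hq hp).mp (hq.dvd_of_dvd_pow h)).symm
      · exact hqr ((Nat.prime_dvd_prime_iff_eq hq hr).mp h)
  have hp3 : p ^ 3 ∣ Nat.card G := ⟨q * r, by rw [hcard]; ring⟩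
  have hrdvd : r ^ 1 ∣ Nat.card G := ⟨p ^ 3 * q, by rw [hcard]; ring⟩
  obtain ⟨P1, hP1⟩ := Sylow.exists_subgroup_card_pow_prime p
    (dvd_trans (pow_dvd_pow p (by norm_num : 1 ≤ 3)) hp3)
  obtain ⟨P2, hP2⟩ := Sylow.exists_subgroup_card_pow_prime p
    (dvd_trans (pow_dvd_pow p (by norm_num : 2 ≤ 3)) hp3)
  obtain ⟨P3, hP3⟩ := Sylow.exists_subgroup_card_pow_prime p hp3
  obtain ⟨R, hR⟩ := Sylow.exists_subgroup_card_pow_prime r hrdvd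
  rw [pow_one] at hP1 hR
  have copQP : Nat.Coprime q p := (Nat.coprime_primes hq hp).mpr (Ne.symm hpq)
  have copQR : Nat.Coprime q r := (Nat.coprime_primes hq hr).mpr hqr
  have c1 : Nat.card ↥(S ⊔ P1) = q * p := by
    rw [card_sup_of_coprime S P1 (by rw [hcS, hP1]; exact copQP), hcS, hP1]
  have c2 : Nat.card ↥(S ⊔ P2) = q * p ^ 2 := by
    rw [card_sup_of_coprime S P2 (by rw [hcS, hP2]; exact copQP.pow_right 2), hcS, hP2]
  have c3 : Nat.card ↥(S ⊔ P3) = q * p ^ 3 := by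
    rw [card_sup_of_coprime S P3 (by rw [hcS, hP3]; exact copQP.pow_right 3), hcS, hP3]
  have c4 : Nat.card ↥(S ⊔ R) = q * r := by
    rw [card_sup_of_coprime S R (by rw [hcS, hR]; exact copQR), hcS, hR]
  -- arithmetic facts
  have hppos : 0 < p := by omega
  have hqpos : 0 < q := by omega
  have hpa : p ≤ p ^ 3 := Nat.le_self_pow (by norm_num) p
  have hpa2 : p ^ 2 ≤ p ^ 3 := Nat.pow_le_pow_right (by omega) (by norm_num)
  have hc1lt : ∀ t : ℕ, t ≤ p ^ 3 → q * t < Nat.card G := by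
    intro t ht
    rw [hcard]
    have h1 : q * t ≤ q * p ^ 3 := Nat.mul_le_mul_left q ht
    have h2 : (q * p ^ 3) * 2 ≤ (q * p ^ 3) * r := Nat.mul_le_mul_left _ hr2
    have h3 : 0 < q * p ^ 3 := by positivity
    have e : p ^ 3 * q * r = (q * p ^ 3) * r := by ring
    rw [e]
    omega
  have ht4 : q * r < Nat.card G := by
    rw [hcard]
    have h2 : (q * r) * 2 ≤ (q * r) * p ^ 3 := Nat.mul_le_mul_left _ (by omega)
    have h3 : 0 < q * r := by positivity
    have e : p ^ 3 * q * r = (q * r) * p ^ 3 := by ring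
    rw [e]
    omega
  have cancelq : ∀ a b : ℕ, q * a = q * b → a = b := fun a b h =>
    Nat.eq_of_mul_eq_mul_left hqpos h
  have powinj : Function.Injective (p ^ ·) := Nat.pow_right_injective hp2
  have dpr : ∀ i : ℕ, i ≠ 0 → p ^ i ≠ r := by
    intro i hi h
    exact hpr ((Nat.prime_dvd_prime_iff_eq hp hr).mp (h ▸ dvd_pow_self p hi))
  refine clique5 S hSbot S (S ⊔ P1) (S ⊔ P2) (S ⊔ P3) (S ⊔ R)
    q (q * p) (q * p ^ 2) (q * p ^ 3) (q * r)
    hcS c1 c2 c3 c4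
    le_rfl le_sup_left le_sup_left le_sup_left le_sup_left
    (by have := hc1lt 1 (by omega); omega)
    (hc1lt p hpa).ne (hc1lt (p ^ 2) hpa2).ne (hc1lt (p ^ 3) le_rfl).ne ht4.ne
    ?_ ?_ ?_ ?_ ?_ ?_ ?_ ?_ ?_ ?_
  · intro h
    have h' : (1 : ℕ) = p := cancelq 1 p (by rw [mul_one]; exact h)
    omega
  · intro h
    have h' : (1 : ℕ) = p ^ 2 := cancelq 1 (p ^ 2) (by rw [mul_one]; exact h)
    have : 1 < p ^ 2 := one_lt_pow' hp.one_lt two_ne_zero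
    omega
  · intro h
    have h' : (1 : ℕ) = p ^ 3 := cancelq 1 (p ^ 3) (by rw [mul_one]; exact h)
    have : 1 < p ^ 3 := one_lt_pow' hp.one_lt three_ne_zero
    omega
  · intro h
    have h' : (1 : ℕ) = r := cancelq 1 r (by rw [mul_one]; exact h)
    omega
  · intro h
    have h' : p ^ 1 = p ^ 2 := by rw [pow_one]; exact cancelq _ _ h
    have := powinj h'
    simp at this
  · intro h
    have h' : p ^ 1 = p ^ 3 := by rw [pow_one]; exact cancelq _ _ h
    have := powinj h'
    simp at this
  · intro h
    exact dpr 1 one_ne_zero (by rw [pow_one]; exact cancelq _ _ h)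
  · intro h
    have h' : p ^ 2 = p ^ 3 := cancelq _ _ h
    have := powinj h'
    simp at this
  · intro h
    exact dpr 2 two_ne_zero (cancelq _ _ h)
  · intro h
    exact dpr 3 three_ne_zero (cancelq _ _ h)

/-- The case where the normal prime-power subgroup is a `p`-group, `p` the cubed prime. -/
private lemma case_p [Finite G] {p q r : ℕ}
    (hp : p.Prime) (hq : q.Prime) (hr : r.Prime)
    (hpq : p ≠ q) (hpr : p ≠ r) (hqr : q ≠ r)
    (hcard : Nat.card G = p ^ 3 * q * r)
    (S : Subgroup G) [S.Normal] (hSbot : S ≠ ⊥) (hS : IsPGroup p S) :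
    ∃ s, (interGraph G).IsNClique 5 s := by
  haveI := Fact.mk hp; haveI := Fact.mk hq; haveI := Fact.mk hr
  have hp2 := hp.two_le; have hq2 := hq.two_le; have hr2 := hr.two_le
  obtain ⟨k, hk⟩ := hS.exists_card_eq
  have hSdvd : Nat.card S ∣ Nat.card G := Subgroup.card_subgroup_dvd_card S
  have hk0 : k ≠ 0 := by
    rintro rfl
    exact hSbot (Subgroup.card_eq_one.mp (by simpa using hk))
  have copPR : Nat.Coprime p r := (Nat.coprime_primes hp hr).mpr hpr
  have copPQ : Nat.Coprime p q := (Nat.coprime_primes hp hq).mpr hpq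
  -- `Nat.card S ∣ p ^ 3`
  have hSp3 : Nat.card S ∣ p ^ 3 := by
    have h1 : Nat.card S ∣ (p ^ 3 * q) * r := by rw [← hcard]; exact hSdvd
    have h2 : Nat.card S ∣ p ^ 3 * q :=
      (Nat.Coprime.dvd_of_dvd_mul_right (by rw [hk]; exact copPR.pow_left k) h1)
    exact Nat.Coprime.dvd_of_dvd_mul_right (by rw [hk]; exact copPQ.pow_left k) h2
  -- an element of order `p` in `S`
  have hpS : p ∣ Nat.card S := by rw [hk]; exact dvd_pow_self p hk0
  obtain ⟨x, hx⟩ := exists_prime_orderOf_dvd_card' (G := ↥S) p hpS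
  have hxord : orderOf (x : G) = p :=
    (orderOf_injective S.subtype (Subgroup.subtype_injective S) x).trans hx
  have hcC1 : Nat.card (Subgroup.zpowers (x : G)) = p := by
    rw [Nat.card_zpowers, hxord]
  set C1 : Subgroup G := Subgroup.zpowers (x : G) with hC1def
  have hC1S : C1 ≤ S := Subgroup.zpowers_le.mpr x.2
  have hC1bot : C1 ≠ ⊥ := by
    intro h
    rw [h, Subgroup.card_bot] at hcC1
    omega
  -- subgroups of order p², p³ containing C1
  have hp3 : p ^ 3 ∣ Nat.card G := ⟨q * r, by rw [hcard]; ring⟩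
  obtain ⟨P2, hP2c, hP2le⟩ := Sylow.exists_subgroup_card_pow_prime_le p
    (dvd_trans (pow_dvd_pow p (by norm_num : 2 ≤ 3)) hp3) C1
    (by rw [hcC1, pow_one]) (by norm_num : 1 ≤ 2)
  obtain ⟨P3, hP3c, hP3le⟩ := Sylow.exists_subgroup_card_pow_prime_le p hp3 C1
    (by rw [hcC1, pow_one]) (by norm_num : 1 ≤ 3)
  -- subgroups of order q, r
  obtain ⟨Q, hQ⟩ := Sylow.exists_subgroup_card_pow_prime q
    (⟨p ^ 3 * r, by rw [hcard]; ring⟩ : q ^ 1 ∣ Nat.card G)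
  obtain ⟨R, hR⟩ := Sylow.exists_subgroup_card_pow_prime r
    (⟨p ^ 3 * q, by rw [hcard]; ring⟩ : r ^ 1 ∣ Nat.card G)
  rw [pow_one] at hQ hR
  have cQ : Nat.card ↥(S ⊔ Q) = Nat.card S * q := by
    rw [card_sup_of_coprime S Q (by rw [hk, hQ]; exact copPQ.pow_left k), hQ]
  have cR : Nat.card ↥(S ⊔ R) = Nat.card S * r := by
    rw [card_sup_of_coprime S R (by rw [hk, hR]; exact copPR.pow_left k), hR]
  -- arithmetic
  have hppos : 0 < p := by omega
  have hbpos : 0 < Nat.card S := Nat.card_pos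
  have hble : Nat.card S ≤ p ^ 3 := Nat.le_of_dvd (by positivity) hSp3
  have hpa : p ≤ p ^ 3 := Nat.le_self_pow (by norm_num) p
  have hpa2 : p ^ 2 ≤ p ^ 3 := Nat.pow_le_pow_right (by omega) (by norm_num)
  have hA : 0 < p ^ 3 := by positivity
  have hcardlt : p ^ 3 * 4 ≤ Nat.card G := by
    rw [hcard]
    have h4 : 4 ≤ q * r := by nlinarith
    calc p ^ 3 * 4 ≤ p ^ 3 * (q * r) := Nat.mul_le_mul_left _ h4
    _ = p ^ 3 * q * r := by ring
  have tp : ∀ t : ℕ, t ≤ p ^ 3 → t < Nat.card G := by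
    intro t ht; omega
  have tq : Nat.card S * q < Nat.card G := by
    rw [hcard]
    have h1 : Nat.card S * q ≤ p ^ 3 * q := Nat.mul_le_mul_right q hble
    have h2 : (p ^ 3 * q) * 2 ≤ (p ^ 3 * q) * r := Nat.mul_le_mul_left _ hr2
    have h3 : 0 < p ^ 3 * q := by positivity
    omega
  have tr : Nat.card S * r < Nat.card G := by
    rw [hcard]
    have h1 : Nat.card S * r ≤ p ^ 3 * r := Nat.mul_le_mul_right r hble
    have h2 : (p ^ 3 * r) * 2 ≤ (p ^ 3 * r) * q := Nat.mul_le_mul_left _ hq2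
    have h3 : 0 < p ^ 3 * r := by positivity
    have e : p ^ 3 * q * r = (p ^ 3 * r) * q := by ring
    rw [e]
    omega
  have powinj : Function.Injective (p ^ ·) := Nat.pow_right_injective hp2
  have dq : ∀ i : ℕ, i ≠ 0 → p ^ i ≠ Nat.card S * q := by
    intro i hi h
    have : q ∣ p ^ i := h ▸ dvd_mul_left q (Nat.card S)
    exact hpq ((Nat.prime_dvd_prime_iff_eq hq hp).mp (hq.dvd_of_dvd_pow this)).symm
  have dr : ∀ i : ℕ, i ≠ 0 → p ^ i ≠ Nat.card S * r := by
    intro i hi h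
    have : r ∣ p ^ i := h ▸ dvd_mul_left r (Nat.card S)
    exact hpr ((Nat.prime_dvd_prime_iff_eq hr hp).mp (hr.dvd_of_dvd_pow this)).symm
  refine clique5 C1 hC1bot C1 P2 P3 (S ⊔ Q) (S ⊔ R)
    p (p ^ 2) (p ^ 3) (Nat.card S * q) (Nat.card S * r)
    hcC1 hP2c hP3c cQ cR
    le_rfl hP2le hP3le (hC1S.trans le_sup_left) (hC1S.trans le_sup_left)
    (tp p hpa).ne (tp (p ^ 2) hpa2).ne (tp (p ^ 3) le_rfl).ne tq.ne tr.ne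
    ?_ ?_ ?_ ?_ ?_ ?_ ?_ ?_ ?_ ?_
  · intro h
    have h' : p ^ 1 = p ^ 2 := by rw [pow_one]; exact h
    have := powinj h'; simp at this
  · intro h
    have h' : p ^ 1 = p ^ 3 := by rw [pow_one]; exact h
    have := powinj h'; simp at this
  · intro h
    exact dq 1 one_ne_zero (by rw [pow_one]; exact h)
  · intro h
    exact dr 1 one_ne_zero (by rw [pow_one]; exact h)
  · intro h
    have := powinj h; simp at this
  · exact dq 2 two_ne_zero
  · exact dr 2 two_ne_zero
  · exact dq 3 three_ne_zero
  · exact dr 3 three_ne_zero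
  · intro h
    exact hqr (Nat.eq_of_mul_eq_mul_left hbpos h)

end Cases

open scoped commutatorElement in
private lemma exists_normal_pgroup (G : Type*) [Group G] [Finite G] [Group.IsSolvable G]
    (hna : ¬ ∀ a b : G, a * b = b * a) :
    ∃ (s : ℕ) (S : Subgroup G), s.Prime ∧ S.Normal ∧ S ≠ ⊥ ∧ IsPGroup s S := by
  obtain ⟨n, hn⟩ := Group.IsSolvable.solvable (G := G)
  have hex : ∃ n, derivedSeries G n = ⊥ := ⟨n, hn⟩
  classical
  set n0 := Nat.find hex with hn0def
  have hbot : derivedSeries G n0 = ⊥ := Nat.find_spec hex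
  have hn0pos : n0 ≠ 0 := by
    intro h
    rw [h, derivedSeries_zero] at hbot
    apply hna
    intro a b
    have ha : a = 1 := by
      have : a ∈ (⊥ : Subgroup G) := hbot ▸ Subgroup.mem_top a
      simpa [Subgroup.mem_bot] using this
    have hb : b = 1 := by
      have : b ∈ (⊥ : Subgroup G) := hbot ▸ Subgroup.mem_top b
      simpa [Subgroup.mem_bot] using this
    rw [ha, hb]
  set A := derivedSeries G (n0 - 1) with hAdef
  have hAbot : A ≠ ⊥ := Nat.find_min hex (by omega)
  haveI hAn : A.Normal := derivedSeries_normal G (n0 - 1)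
  have habel : ∀ a ∈ A, ∀ b ∈ A, a * b = b * a := by
    intro a ha b hb
    have h1 : ⁅a, b⁆ ∈ ⁅A, A⁆ := Subgroup.commutator_mem_commutator ha hb
    have h2 : ⁅A, A⁆ = derivedSeries G n0 := by
      rw [hAdef, ← derivedSeries_succ]
      congr 1
      omega
    rw [h2, hbot, Subgroup.mem_bot] at h1
    exact commutatorElement_eq_one_iff_mul_comm.mp h1
  have hA1 : 1 < Nat.card ↥A := by
    exact (Subgroup.one_lt_card_iff_ne_bot A).mpr hAbot
  set s := (Nat.card ↥A).minFac with hsdef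
  have hs : s.Prime := Nat.minFac_prime (by omega)
  haveI := Fact.mk hs
  obtain ⟨x, hx⟩ := exists_prime_orderOf_dvd_card' (G := ↥A) s (Nat.minFac_dvd _)
  let S : Subgroup G :=
    { carrier := {g | g ∈ A ∧ ∃ m : ℕ, g ^ s ^ m = 1}
      one_mem' := ⟨A.one_mem, 0, by simp⟩
      mul_mem' := by
        intro a b ha hb
        obtain ⟨haA, m, hm⟩ := ha
        obtain ⟨hbA, l, hl⟩ := hb
        refine ⟨A.mul_mem haA hbA, m + l, ?_⟩
        have hab : Commute a b := habel a haA b hbA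
        rw [hab.mul_pow]
        have h1 : a ^ s ^ (m + l) = 1 := by
          rw [pow_add, pow_mul, hm, one_pow]
        have h2 : b ^ s ^ (m + l) = 1 := by
          rw [pow_add, mul_comm (s ^ m), pow_mul, hl, one_pow]
        rw [h1, h2, one_mul]
      inv_mem' := by
        intro a ha
        obtain ⟨haA, m, hm⟩ := ha
        exact ⟨A.inv_mem haA, m, by rw [inv_pow, hm, inv_one]⟩ }
  have hmem : ∀ g : G, g ∈ S ↔ g ∈ A ∧ ∃ m : ℕ, g ^ s ^ m = 1 := fun g => Iff.rfl
  refine ⟨s, S, hs, ?_, ?_, ?_⟩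
  · constructor
    intro a haS g
    obtain ⟨haA, m, hm⟩ := (hmem a).mp haS
    refine (hmem _).mpr ⟨hAn.conj_mem a haA g, m, ?_⟩
    calc (g * a * g⁻¹) ^ s ^ m = g * a ^ s ^ m * g⁻¹ := conj_pow
    _ = 1 := by rw [hm]; group
  · intro h
    have hxs : (x : ↥A) ^ s = 1 := by rw [← hx]; exact pow_orderOf_eq_one x
    have hxS : (x : G) ∈ S := by
      refine (hmem _).mpr ⟨x.2, 1, ?_⟩
      rw [pow_one]
      simpa using congrArg (Subgroup.subtype A) hxs
    rw [h, Subgroup.mem_bot] at hxS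
    have hx1 : x = 1 := Subtype.ext (by simpa using hxS)
    rw [hx1, orderOf_one] at hx
    exact hs.one_lt.ne' hx.symm
  · intro y
    obtain ⟨-, m, hm⟩ := (hmem (y : G)).mp y.2
    exact ⟨m, Subtype.ext (by rw [SubmonoidClass.coe_pow]; exact hm)⟩

theorem intersectionGraph_has_K5_of_nonabelian_solvable_p3qr
    (p q r : ℕ) (hp : p.Prime) (hq : q.Prime) (hr : r.Prime)
    (hpq : p ≠ q) (hpr : p ≠ r) (hqr : q ≠ r)
    (G : Type*) [Group G] [Group.IsSolvable G] (hcard : Nat.card G = p ^ 3 * q * r)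
    (hna : ¬ ∀ a b : G, a * b = b * a) :
    ∃ s, (interGraph G).IsNClique 5 s := by
  have hfin : Finite G := Nat.finite_of_card_ne_zero (by
    rw [hcard]
    have := hp.pos; have := hq.pos; have := hr.pos
    positivity)
  obtain ⟨s, S, hs, hSn, hSbot, hSp⟩ := exists_normal_pgroup G hna
  haveI := hSn
  haveI := Fact.mk hs
  have hsdvd : s ∣ Nat.card G := by
    obtain ⟨k, hk⟩ := hSp.exists_card_eq
    have hk0 : k ≠ 0 := by
      rintro rfl
      exact hSbot (Subgroup.card_eq_one.mp (by simpa using hk))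
    exact dvd_trans (hk ▸ dvd_pow_self s hk0) (Subgroup.card_subgroup_dvd_card S)
  rw [hcard] at hsdvd
  rcases (Nat.Prime.dvd_mul hs).mp hsdvd with h | h
  · rcases (Nat.Prime.dvd_mul hs).mp h with h' | h'
    · have hsp : s = p := (Nat.prime_dvd_prime_iff_eq hs hp).mp (hs.dvd_of_dvd_pow h')
      subst hsp
      exact case_p hs hq hr hpq hpr hqr hcard S hSbot hSp
    · have hsq : s = q := (Nat.prime_dvd_prime_iff_eq hs hq).mp h'
      subst hsq
      exact case_q hp hs hr hpq hpr hqr hcard S hSbot hSp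
  · have hsr : s = r := (Nat.prime_dvd_prime_iff_eq hs hr).mp h
    subst hsr
    exact case_q hp hs hq hpr hpq (Ne.symm hqr) (by rw [hcard]; ring) S hSbot hSp
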